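/- Let k be a commutative ring. Let f : k[X,Y]/(X²,Y²,XY) → k[X,Y]/(X²,Y²) be the k-algebra homomorphism induced by X ↦ X, Y ↦ XY; let g, h : k[X,Y]/(X²,Y²) → k[X]/(X²) be the k-algebra homomorphisms induced by X ↦ 0, Y ↦ 0 and by X ↦ 0, Y ↦ X respectively. Then for every commutative k-algebra T and every k-algebra homomorphism u : T → k[X,Y]/(X²,Y²) with g ∘ u = h ∘ u, there exists a unique k-algebra homomorphism v : T → k[X,Y]/(X²,Y²,XY) such that f ∘ v = u. -/

import Mathlib

open MvPolynomial

noncomputable section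

/-- The ideal `(X², Y², XY)` in `k[X,Y]`. -/
def idealXXYYXY (k : Type*) [CommRing k] : Ideal (MvPolynomial (Fin 2) k) :=
  Ideal.span {(X 0 : MvPolynomial (Fin 2) k) ^ 2, (X 1) ^ 2, (X 0) * (X 1)}

/-- The ideal `(X², Y²)` in `k[X,Y]`. -/
def idealXXYY (k : Type*) [CommRing k] : Ideal (MvPolynomial (Fin 2) k) :=
  Ideal.span {(X 0 : MvPolynomial (Fin 2) k) ^ 2, (X 1) ^ 2}

/-- The ideal `(X²)` in `k[X]`. -/
def idealXX (k : Type*) [CommRing k] : Ideal (Polynomial k) :=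
  Ideal.span {(Polynomial.X : Polynomial k) ^ 2}

namespace Stmt1Aux
open TrivSqZeroExt DualNumber
variable {k : Type*} [CommRing k]

set_option synthInstance.maxHeartbeats 1000000 in
def Phi (k : Type*) [CommRing k] : MvPolynomial (Fin 2) k →ₐ[k] DualNumber (DualNumber k) :=
  aeval ![(eps : DualNumber (DualNumber k)), inl eps]

set_option synthInstance.maxHeartbeats 1000000 in
lemma phi_sq0 : Phi k (X 0 ^ 2) = 0 := by
  simp [Phi, sq, eps_mul_eps]

set_option synthInstance.maxHeartbeats 1000000 in
lemma phi_sq1 : Phi k (X 1 ^ 2) = 0 := by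
  simp only [Phi, sq, map_mul, aeval_X, Matrix.cons_val_one, Matrix.head_cons, Matrix.cons_val_zero, inl_mul_inl,
    eps_mul_eps, inl_zero]

lemma phi_ideal (p : MvPolynomial (Fin 2) k) (hp : p ∈ idealXXYY k) : Phi k p = 0 := by
  have : idealXXYY k ≤ RingHom.ker (Phi k).toRingHom := by
    rw [idealXXYY, Ideal.span_le]
    rintro q hq
    simp only [Set.mem_insert_iff, Set.mem_singleton_iff] at hq
    rcases hq with rfl | rfl
    · exact phi_sq0
    · exact phi_sq1
  exact this hp

set_option synthInstance.maxHeartbeats 1000000 in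
set_option maxHeartbeats 1000000 in
lemma indep (a b c d : k)
    (h : C a + C b * X 0 + C c * X 1 + C d * (X 0 * X 1) ∈ idealXXYY k) :
    a = 0 ∧ b = 0 ∧ c = 0 ∧ d = 0 := by
  have h0 := phi_ideal _ h
  rw [map_add, map_add, map_add, map_mul, map_mul, map_mul, map_mul] at h0
  simp only [Phi, aeval_X, aeval_C, Matrix.cons_val_zero, Matrix.cons_val_one,
    Matrix.head_cons] at h0
  have hfst := congrArg fst h0
  have hsnd := congrArg snd h0
  simp [algebraMap_eq_inl'] at hfst hsnd
  have h1 := congrArg fst hfst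
  have h2 := congrArg snd hfst
  have h3 := congrArg fst hsnd
  have h4 := congrArg snd hsnd
  simp at h1 h2 h3 h4
  exact ⟨h1, h3, h2, h4⟩

lemma decomp (p : MvPolynomial (Fin 2) k) :
    ∃ a b c d : k, p - (C a + C b * X 0 + C c * X 1 + C d * (X 0 * X 1)) ∈ idealXXYY k := by
  induction p using MvPolynomial.induction_on with
  | C r => exact ⟨r, 0, 0, 0, by simp⟩
  | add p q hp hq =>
      obtain ⟨a, b, c, d, hp⟩ := hp
      obtain ⟨a', b', c', d', hq⟩ := hq
      refine ⟨a + a', b + b', c + c', d + d', ?_⟩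
      have := Ideal.add_mem _ hp hq
      convert this using 1
      push_cast [map_add]
      ring
  | mul_X p i hp =>
      obtain ⟨a, b, c, d, hp⟩ := hp
      have hx0 : ((X 0 : MvPolynomial (Fin 2) k) ^ 2) ∈ idealXXYY k :=
        Ideal.subset_span (by simp)
      have hx1 : ((X 1 : MvPolynomial (Fin 2) k) ^ 2) ∈ idealXXYY k :=
        Ideal.subset_span (by simp)
      fin_cases i
      · refine ⟨0, a, 0, c, ?_⟩
        have h1 := Ideal.mul_mem_left _ (X 0) hp
        have h2 := Ideal.mul_mem_left _ (C b) hx0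
        have h3 := Ideal.mul_mem_left _ (C d * X 1) hx0
        have := Ideal.add_mem _ (Ideal.add_mem _ h1 h2) h3
        convert this using 1
        push_cast [map_zero]
        ring
      · refine ⟨0, 0, a, b, ?_⟩
        have h1 := Ideal.mul_mem_left _ (X 1) hp
        have h2 := Ideal.mul_mem_left _ (C c) hx1
        have h3 := Ideal.mul_mem_left _ (C d * X 0) hx1
        have := Ideal.add_mem _ (Ideal.add_mem _ h1 h2) h3
        convert this using 1
        push_cast [map_zero]
        ring

lemma polyC (c : k) (h : Polynomial.C c * Polynomial.X ∈ idealXX k) : c = 0 := by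
  have hker : idealXX k ≤ RingHom.ker (Polynomial.aeval (eps : DualNumber k)).toRingHom := by
    rw [idealXX, Ideal.span_le]
    rintro q hq
    simp only [Set.mem_singleton_iff] at hq
    subst hq
    simp [RingHom.mem_ker, sq, eps_mul_eps]
  have h0 : (Polynomial.aeval (eps : DualNumber k)) (Polynomial.C c * Polynomial.X) = 0 := hker h
  simp only [map_mul, Polynomial.aeval_C, Polynomial.aeval_X] at h0
  have := congrArg snd h0
  simpa [algebraMap_eq_inl'] using this

end Stmt1Aux

/-- Universal (equalizer) property: with `f : k[X,Y]/(X²,Y²,XY) → k[X,Y]/(X²,Y²)` induced by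
`X ↦ X, Y ↦ XY`, and `g, h : k[X,Y]/(X²,Y²) → k[X]/(X²)` induced by `X ↦ 0, Y ↦ 0` and
`X ↦ 0, Y ↦ X` respectively, every `k`-algebra homomorphism `u : T → k[X,Y]/(X²,Y²)` with
`g ∘ u = h ∘ u` factors uniquely through `f`. -/
theorem stmt_1 (k : Type*) [CommRing k]
    (f : (MvPolynomial (Fin 2) k ⧸ idealXXYYXY k) →ₐ[k] (MvPolynomial (Fin 2) k ⧸ idealXXYY k))
    (g h : (MvPolynomial (Fin 2) k ⧸ idealXXYY k) →ₐ[k] (Polynomial k ⧸ idealXX k))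
    (hf0 : f (Ideal.Quotient.mk (idealXXYYXY k) (X 0)) = Ideal.Quotient.mk (idealXXYY k) (X 0))
    (hf1 : f (Ideal.Quotient.mk (idealXXYYXY k) (X 1)) =
      Ideal.Quotient.mk (idealXXYY k) ((X 0) * (X 1)))
    (hg0 : g (Ideal.Quotient.mk (idealXXYY k) (X 0)) = 0)
    (hg1 : g (Ideal.Quotient.mk (idealXXYY k) (X 1)) = 0)
    (hh0 : h (Ideal.Quotient.mk (idealXXYY k) (X 0)) = 0)
    (hh1 : h (Ideal.Quotient.mk (idealXXYY k) (X 1)) =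
      Ideal.Quotient.mk (idealXX k) Polynomial.X)
    (T : Type*) [CommRing T] [Algebra k T]
    (u : T →ₐ[k] (MvPolynomial (Fin 2) k ⧸ idealXXYY k))
    (hu : g.comp u = h.comp u) :
    ∃! v : T →ₐ[k] (MvPolynomial (Fin 2) k ⧸ idealXXYYXY k), f.comp v = u := by
  classical
  have hIJ : idealXXYY k ≤ idealXXYYXY k := by
    rw [idealXXYY, idealXXYYXY]
    apply Ideal.span_mono
    intro x hx
    simp only [Set.mem_insert_iff, Set.mem_singleton_iff] at hx ⊢
    tauto
  have hXYJ : (X 0 : MvPolynomial (Fin 2) k) * X 1 ∈ idealXXYYXY k :=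
    Ideal.subset_span (by simp [idealXXYYXY])
  have fkey : ∀ a b c : k,
      f (Ideal.Quotient.mk (idealXXYYXY k) (C a + C b * X 0 + C c * X 1)) =
        Ideal.Quotient.mk (idealXXYY k) (C a + C b * X 0 + C c * (X 0 * X 1)) := by
    intro a b c
    simp only [map_add, map_mul, hf0, hf1, ← MvPolynomial.algebraMap_eq,
      Ideal.Quotient.mk_algebraMap, AlgHom.commutes]
  have hinj : Function.Injective f := by
    have hz : ∀ z, f z = 0 → z = 0 := by
      intro z hfz
      obtain ⟨p, rfl⟩ := Ideal.Quotient.mk_surjective z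
      obtain ⟨a, b, c, d, hd⟩ := Stmt1Aux.decomp p
      have hp : Ideal.Quotient.mk (idealXXYYXY k) p =
          Ideal.Quotient.mk (idealXXYYXY k) (C a + C b * X 0 + C c * X 1) := by
        rw [Ideal.Quotient.eq]
        have h1 := hIJ hd
        have h2 := Ideal.mul_mem_left _ (C d) hXYJ
        have := Ideal.add_mem _ h1 h2
        convert this using 1
        ring
      rw [hp, fkey] at hfz
      have hmem : C a + C b * X 0 + C c * (X 0 * X 1) ∈ idealXXYY k := by
        rwa [Ideal.Quotient.eq_zero_iff_mem] at hfz
      have hmem' : C a + C b * X 0 + C (0 : k) * X 1 + C c * (X 0 * X 1) ∈ idealXXYY k := by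
        convert hmem using 1
        push_cast [map_zero]
        ring
      obtain ⟨ha, hb, -, hc⟩ := Stmt1Aux.indep a b 0 c hmem'
      rw [hp, ha, hb, hc]
      simp
    intro x y hxy
    have := hz (x - y) (by rw [map_sub, hxy, sub_self])
    exact sub_eq_zero.mp this
  have hrange : ∀ t, u t ∈ f.range := by
    intro t
    obtain ⟨p, hp⟩ := Ideal.Quotient.mk_surjective (u t)
    obtain ⟨a, b, c, d, hd⟩ := Stmt1Aux.decomp p
    have hut : u t = Ideal.Quotient.mk (idealXXYY k)
        (C a + C b * X 0 + C c * X 1 + C d * (X 0 * X 1)) := by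
      rw [← hp, Ideal.Quotient.eq]
      exact hd
    have hgu : g (u t) = h (u t) := DFunLike.congr_fun hu t
    rw [hut] at hgu
    simp only [map_add, map_mul, hg0, hg1, hh0, hh1, ← MvPolynomial.algebraMap_eq,
      Ideal.Quotient.mk_algebraMap, AlgHom.commutes, mul_zero, add_zero, zero_mul] at hgu
    have hc0 : algebraMap k (Polynomial k ⧸ idealXX k) c *
        Ideal.Quotient.mk (idealXX k) Polynomial.X = 0 := by
      have := hgu.symm
      rwa [add_eq_left] at this
    have hcmem : Polynomial.C c * Polynomial.X ∈ idealXX k := by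
      rw [← Ideal.Quotient.eq_zero_iff_mem, map_mul, ← Polynomial.algebraMap_eq,
        Ideal.Quotient.mk_algebraMap]
      exact hc0
    have hc : c = 0 := Stmt1Aux.polyC c hcmem
    subst hc
    refine ⟨Ideal.Quotient.mk (idealXXYYXY k) (C a + C b * X 0 + C d * X 1), ?_⟩
    show f (Ideal.Quotient.mk (idealXXYYXY k) (C a + C b * X 0 + C d * X 1)) = u t
    rw [fkey, hut]
    simp only [map_zero, zero_mul, add_zero]
  let e := AlgEquiv.ofInjective f hinj
  let u' : T →ₐ[k] f.range := u.codRestrict f.range hrange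
  have hfv : ∀ t, f (e.symm (u' t)) = u t := by
    intro t
    rw [← AlgEquiv.ofInjective_apply f hinj, AlgEquiv.apply_symm_apply]
    rfl
  refine ⟨(e.symm : f.range →ₐ[k] _).comp u', ?_, ?_⟩
  · ext t
    exact hfv t
  · intro v' hv'
    ext t
    apply hinj
    exact (DFunLike.congr_fun hv' t).trans (hfv t).symm
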